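/- arXiv:1012.1016 — 2 statements merged into one kernel-verified Lean document; each statement's English description precedes it below -/
import Mathlib

section
/- Let K be an algebraically closed field and n ≥ 3. The ideal I_{2,n} generated by all 2×2 minors of the reduced Kalman matrix for d = 2 equals the ideal generated by the (n−2 choose 2) quadrics a_{i1}a_{j2} − a_{i2}a_{j1} for 3 ≤ i < j ≤ n together with the (n−1 choose 2) cubics a_{11}a_{i2}a_{j1} − a_{12}a_{i1}a_{j1} + a_{21}a_{i2}a_{j2} − a_{22}a_{i1}a_{j2} for 3 ≤ i ≤ j ≤ n. -/
open Matrix MvPolynomial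

/-- The reduced Kalman matrix built from a `d × d` block `A11` and an `m × d` block `A21`: the
vertical stacking of the blocks `A21 * A11 ^ i` for `i = 0, 1, …, d - 1`. -/
noncomputable def reducedKalman {R : Type*} [CommRing R] {d m : ℕ}
    (A11 : Matrix (Fin d) (Fin d) R) (A21 : Matrix (Fin m) (Fin d) R) :
    Matrix (Fin d × Fin m) (Fin d) R :=
  fun p j => (A21 * A11 ^ (p.1 : ℕ)) p.2 j

/-- The generic upper-left `2 × 2` block of the generic `n × n` matrix `(a_{ij})`. -/
noncomputable def genA11 (K : Type*) [CommSemiring K] (n : ℕ) (hn : 3 ≤ n) :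
    Matrix (Fin 2) (Fin 2) (MvPolynomial (Fin n × Fin n) K) :=
  fun i j => X (⟨(i : ℕ), by have := i.isLt; omega⟩, ⟨(j : ℕ), by have := j.isLt; omega⟩)

/-- The generic lower-left `(n-2) × 2` block of the generic `n × n` matrix `(a_{ij})`. -/
noncomputable def genA21 (K : Type*) [CommSemiring K] (n : ℕ) (hn : 3 ≤ n) :
    Matrix (Fin (n - 2)) (Fin 2) (MvPolynomial (Fin n × Fin n) K) :=
  fun r j => X (⟨2 + (r : ℕ), by have := r.isLt; omega⟩, ⟨(j : ℕ), by have := j.isLt; omega⟩)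

section
variable {K : Type*} [Field K] {n : ℕ}

lemma kalv (hn : 3 ≤ n) (b : ℕ) (hb : b < 2) (s : Fin (n-2)) (j : Fin 2) :
    reducedKalman (genA11 K n hn) (genA21 K n hn) (⟨b, hb⟩, s) j
      = if b = 0 then X (⟨2 + (s:ℕ), by omega⟩, ⟨(j:ℕ), by omega⟩)
        else X (⟨2 + (s:ℕ), by omega⟩, ⟨0, by omega⟩) * X (⟨0, by omega⟩, ⟨(j:ℕ), by omega⟩)
          + X (⟨2 + (s:ℕ), by omega⟩, ⟨1, by omega⟩) * X (⟨1, by omega⟩, ⟨(j:ℕ), by omega⟩) := by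
  rcases b with _ | _ | b
  · simp [reducedKalman, genA21]
  · simp [reducedKalman, genA11, genA21, Matrix.mul_apply, Fin.sum_univ_two]
  · omega

/-- quadric -/
noncomputable def qGen (hn : 3 ≤ n) (i j : Fin n) : MvPolynomial (Fin n × Fin n) K :=
  X (i, (⟨0, by linarith⟩ : Fin n)) * X (j, (⟨1, by linarith⟩ : Fin n))
    - X (i, (⟨1, by linarith⟩ : Fin n)) * X (j, (⟨0, by linarith⟩ : Fin n))

/-- cubic -/
noncomputable def cGen (hn : 3 ≤ n) (i j : Fin n) : MvPolynomial (Fin n × Fin n) K :=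
  X ((⟨0, by linarith⟩ : Fin n), (⟨0, by linarith⟩ : Fin n))
      * X (i, (⟨1, by linarith⟩ : Fin n)) * X (j, (⟨0, by linarith⟩ : Fin n))
  - X ((⟨0, by linarith⟩ : Fin n), (⟨1, by linarith⟩ : Fin n))
      * X (i, (⟨0, by linarith⟩ : Fin n)) * X (j, (⟨0, by linarith⟩ : Fin n))
  + X ((⟨1, by linarith⟩ : Fin n), (⟨0, by linarith⟩ : Fin n))
      * X (i, (⟨1, by linarith⟩ : Fin n)) * X (j, (⟨1, by linarith⟩ : Fin n))
  - X ((⟨1, by linarith⟩ : Fin n), (⟨1, by linarith⟩ : Fin n))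
      * X (i, (⟨0, by linarith⟩ : Fin n)) * X (j, (⟨1, by linarith⟩ : Fin n))

lemma det_mem (hn : 3 ≤ n) (J : Ideal (MvPolynomial (Fin n × Fin n) K))
    (hQ : ∀ i j : Fin n, 2 ≤ (i:ℕ) → i < j → qGen hn i j ∈ J)
    (hC : ∀ i j : Fin n, 2 ≤ (i:ℕ) → i ≤ j → cGen hn i j ∈ J)
    (r : Fin 2 → Fin 2 × Fin (n - 2)) :
    ((reducedKalman (genA11 K n hn) (genA21 K n hn)).submatrix r id).det ∈ J := by
  have hQ' : ∀ i j : Fin n, 2 ≤ (i:ℕ) → 2 ≤ (j:ℕ) → qGen hn i j ∈ J := by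
    intro i j hi hj
    rcases lt_trichotomy i j with h | h | h
    · exact hQ i j hi h
    · subst h
      have : qGen (K := K) hn i i = 0 := by simp [qGen]; ring
      rw [this]; exact zero_mem _
    · have : qGen (K := K) hn i j = -qGen hn j i := by simp [qGen]; ring
      rw [this]; exact neg_mem (hQ j i hj h)
  have hC' : ∀ i j : Fin n, 2 ≤ (i:ℕ) → 2 ≤ (j:ℕ) → cGen hn i j ∈ J := by
    intro i j hi hj
    rcases le_or_gt i j with h | h
    · exact hC i j hi h
    · have : cGen (K := K) hn i j = cGen hn j i
          - (X ((⟨0, by omega⟩ : Fin n), (⟨0, by omega⟩ : Fin n))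
             + X ((⟨1, by omega⟩ : Fin n), (⟨1, by omega⟩ : Fin n))) * qGen hn i j := by
        simp [cGen, qGen]; ring
      rw [this]
      exact sub_mem (hC j i hj h.le) (Ideal.mul_mem_left _ _ (hQ' i j hi hj))
  rw [Matrix.det_fin_two]
  simp only [Matrix.submatrix_apply, id]
  rcases h0 : r 0 with ⟨⟨b0, hb0⟩, s0⟩
  rcases h1 : r 1 with ⟨⟨b1, hb1⟩, s1⟩
  simp only [kalv hn]
  have key : ∀ x y : MvPolynomial (Fin n × Fin n) K, x = y → y ∈ J → x ∈ J :=
    fun x y h hy => h ▸ hy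
  interval_cases b0 <;> interval_cases b1
  · exact key _ _ (by norm_num [qGen]; try ring)
      (hQ' ⟨2 + (s0:ℕ), by omega⟩ ⟨2 + (s1:ℕ), by omega⟩
        (Nat.le_add_right 2 _) (Nat.le_add_right 2 _))
  · exact key _ _ (by norm_num [cGen]; try ring)
      (neg_mem (hC' ⟨2 + (s0:ℕ), by omega⟩ ⟨2 + (s1:ℕ), by omega⟩
        (Nat.le_add_right 2 _) (Nat.le_add_right 2 _)))
  · exact key _ _ (by norm_num [cGen]; try ring)
      (hC' ⟨2 + (s1:ℕ), by omega⟩ ⟨2 + (s0:ℕ), by omega⟩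
        (Nat.le_add_right 2 _) (Nat.le_add_right 2 _))
  · exact key _ _ (by norm_num [qGen]; try ring)
      (Ideal.mul_mem_left J
        (X ((⟨0, by omega⟩ : Fin n), (⟨0, by omega⟩ : Fin n))
          * X ((⟨1, by omega⟩ : Fin n), (⟨1, by omega⟩ : Fin n))
          - X ((⟨0, by omega⟩ : Fin n), (⟨1, by omega⟩ : Fin n))
          * X ((⟨1, by omega⟩ : Fin n), (⟨0, by omega⟩ : Fin n)))
        (hQ' ⟨2 + (s0:ℕ), by omega⟩ ⟨2 + (s1:ℕ), by omega⟩
          (Nat.le_add_right 2 _) (Nat.le_add_right 2 _)))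


lemma qGen_mem (hn : 3 ≤ n) (i j : Fin n) (hi : 2 ≤ (i:ℕ)) (hj : 2 ≤ (j:ℕ)) :
    qGen (K := K) hn i j ∈ Ideal.span (Set.range fun r : Fin 2 → Fin 2 × Fin (n - 2) =>
      ((reducedKalman (genA11 K n hn) (genA21 K n hn)).submatrix r id).det) := by
  obtain ⟨iv, hiv⟩ := i
  obtain ⟨jv, hjv⟩ := j
  have hi' : 2 ≤ iv := hi
  have hj' : 2 ≤ jv := hj
  apply Ideal.subset_span
  refine ⟨![(⟨0, by omega⟩, ⟨iv - 2, by omega⟩), (⟨0, by omega⟩, ⟨jv - 2, by omega⟩)], ?_⟩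
  have e1 : 2 + (iv - 2) = iv := by omega
  have e2 : 2 + (jv - 2) = jv := by omega
  simp only [Matrix.det_fin_two, Matrix.submatrix_apply, id, Matrix.cons_val_zero,
    Matrix.cons_val_one, Matrix.head_cons, kalv hn]
  norm_num [qGen, e1, e2]

lemma cGen_mem (hn : 3 ≤ n) (i j : Fin n) (hi : 2 ≤ (i:ℕ)) (hj : 2 ≤ (j:ℕ)) :
    cGen (K := K) hn i j ∈ Ideal.span (Set.range fun r : Fin 2 → Fin 2 × Fin (n - 2) =>
      ((reducedKalman (genA11 K n hn) (genA21 K n hn)).submatrix r id).det) := by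
  obtain ⟨iv, hiv⟩ := i
  obtain ⟨jv, hjv⟩ := j
  have hi' : 2 ≤ iv := hi
  have hj' : 2 ≤ jv := hj
  have e1 : 2 + (iv - 2) = iv := by omega
  have e2 : 2 + (jv - 2) = jv := by omega
  let r : Fin 2 → Fin 2 × Fin (n - 2) :=
    ![(⟨0, by omega⟩, ⟨iv - 2, by omega⟩), (⟨1, by omega⟩, ⟨jv - 2, by omega⟩)]
  have hd : ((reducedKalman (genA11 K n hn) (genA21 K n hn)).submatrix r id).det
      ∈ Ideal.span (Set.range fun r : Fin 2 → Fin 2 × Fin (n - 2) =>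
      ((reducedKalman (genA11 K n hn) (genA21 K n hn)).submatrix r id).det) :=
    Ideal.subset_span ⟨r, rfl⟩
  have e : cGen (K := K) hn ⟨iv, hiv⟩ ⟨jv, hjv⟩
      = -((reducedKalman (genA11 K n hn) (genA21 K n hn)).submatrix r id).det := by
    simp only [r, Matrix.det_fin_two, Matrix.submatrix_apply, id, Matrix.cons_val_zero,
      Matrix.cons_val_one, Matrix.head_cons, kalv hn]
    norm_num [cGen, e1, e2]
    try ring
  rw [e]
  exact neg_mem hd

end


/-- The ideal `I_{2,n}` of `2 × 2` minors of the reduced Kalman matrix for `d = 2` equals the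
ideal generated by the quadrics `a_{i1}a_{j2} - a_{i2}a_{j1}` (for `3 ≤ i < j ≤ n`, here written
with 0-based indices) and the cubics
`a_{11}a_{i2}a_{j1} - a_{12}a_{i1}a_{j1} + a_{21}a_{i2}a_{j2} - a_{22}a_{i1}a_{j2}`
(for `3 ≤ i ≤ j ≤ n`). -/
theorem stmt8 {K : Type*} [Field K] [IsAlgClosed K] (n : ℕ) (hn : 3 ≤ n) :
    Ideal.span (Set.range fun r : Fin 2 → Fin 2 × Fin (n - 2) =>
      ((reducedKalman (genA11 K n hn) (genA21 K n hn)).submatrix r id).det)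
    = Ideal.span
        ({p : MvPolynomial (Fin n × Fin n) K | ∃ i j : Fin n, 2 ≤ (i : ℕ) ∧ i < j ∧
            p = X (i, (⟨0, by omega⟩ : Fin n)) * X (j, (⟨1, by omega⟩ : Fin n))
              - X (i, (⟨1, by omega⟩ : Fin n)) * X (j, (⟨0, by omega⟩ : Fin n))}
        ∪ {p : MvPolynomial (Fin n × Fin n) K | ∃ i j : Fin n, 2 ≤ (i : ℕ) ∧ i ≤ j ∧
            p = X ((⟨0, by omega⟩ : Fin n), (⟨0, by omega⟩ : Fin n))
                  * X (i, (⟨1, by omega⟩ : Fin n)) * X (j, (⟨0, by omega⟩ : Fin n))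
              - X ((⟨0, by omega⟩ : Fin n), (⟨1, by omega⟩ : Fin n))
                  * X (i, (⟨0, by omega⟩ : Fin n)) * X (j, (⟨0, by omega⟩ : Fin n))
              + X ((⟨1, by omega⟩ : Fin n), (⟨0, by omega⟩ : Fin n))
                  * X (i, (⟨1, by omega⟩ : Fin n)) * X (j, (⟨1, by omega⟩ : Fin n))
              - X ((⟨1, by omega⟩ : Fin n), (⟨1, by omega⟩ : Fin n))
                  * X (i, (⟨0, by omega⟩ : Fin n)) * X (j, (⟨1, by omega⟩ : Fin n))}) := by
  apply le_antisymm
  · rw [Ideal.span_le]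
    rintro _ ⟨r, rfl⟩
    exact det_mem hn _
      (fun i j hi hij => Ideal.subset_span (Or.inl ⟨i, j, hi, hij, rfl⟩))
      (fun i j hi hij => Ideal.subset_span (Or.inr ⟨i, j, hi, hij, rfl⟩)) r
  · rw [Ideal.span_le]
    rintro p (⟨i, j, hi, hij, rfl⟩ | ⟨i, j, hi, hij, rfl⟩)
    · exact qGen_mem hn i j hi (by have := Fin.lt_iff_val_lt_val.mp hij; omega)
    · exact cGen_mem hn i j hi (by have := Fin.le_def.mp hij; omega)
end

section
/- Let K be a field, n ≥ 2, 1 ≤ d ≤ n−1, and take C = (0_{(n−d)×d} | I_{n−d}). Then the ideal of K[a_{11}, …, a_{nn}] generated by the n×n minors of the Kalman matrix of the generic n×n matrix A equals the ideal generated by the d×d minors of the small Kalman matrix of A. -/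
open Matrix MvPolynomial

/-- The Kalman matrix of `A` with respect to `C`: the `((d+1)(n-d)) × n` matrix obtained by
vertically stacking the blocks `C * A ^ i` for `i = 0, 1, …, d`. -/
noncomputable def kalmanMatrix {R : Type*} [CommRing R] {n d : ℕ}
    (C : Matrix (Fin (n - d)) (Fin n) R) (A : Matrix (Fin n) (Fin n) R) :
    Matrix (Fin (d + 1) × Fin (n - d)) (Fin n) R :=
  fun p j => (C * A ^ (p.1 : ℕ)) p.2 j

/-- The `(n-d) × n` matrix `C = (0 | I)` consisting of an `(n-d) × d` zero block followed by an
`(n-d) × (n-d)` identity block. -/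
def zeroIdMatrix (R : Type*) [CommRing R] (n d : ℕ) : Matrix (Fin (n - d)) (Fin n) R :=
  fun i j => if (j : ℕ) = d + (i : ℕ) then 1 else 0

/-- The small Kalman matrix of `A`: the `d(n-d) × d` matrix obtained by vertically stacking the
blocks `[A^i]` for `i = 1, …, d`, where `[M]` is the submatrix of `M` formed by the last `n - d`
rows and the first `d` columns. -/
noncomputable def smallKalman {R : Type*} [CommRing R] {n d : ℕ} (hdn : d ≤ n)
    (A : Matrix (Fin n) (Fin n) R) : Matrix (Fin d × Fin (n - d)) (Fin d) R :=
  fun p j =>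
    (A ^ ((p.1 : ℕ) + 1)) ⟨d + (p.2 : ℕ), by have := p.2.isLt; omega⟩
      ⟨(j : ℕ), by have := j.isLt; omega⟩

/-- The generic `n × n` matrix whose entries are the variables of
`K[a_{11}, …, a_{nn}]`. -/
noncomputable def genMatrix (K : Type*) [CommSemiring K] (n : ℕ) :
    Matrix (Fin n) (Fin n) (MvPolynomial (Fin n × Fin n) K) :=
  fun i j => X (i, j)

theorem span_minors_le {R : Type*} [CommRing R] {m m' ι : Type*} [Fintype m] [Fintype m']
    [DecidableEq m] [Fintype ι] [DecidableEq ι]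
    (B : Matrix m' ι R) (M : Matrix m ι R) (U : Matrix m' m R)
    (h : ∀ p, B p = ∑ k, U p k • M k) :
    Ideal.span (Set.range fun r : ι → m' => (B.submatrix r id).det) ≤
      Ideal.span (Set.range fun r : ι → m => (M.submatrix r id).det) := by
  rw [Ideal.span_le]
  rintro _ ⟨r, rfl⟩
  have hB : B.submatrix r id = fun i => ∑ k, U (r i) k • M k := by
    funext i; exact h (r i)
  have key : (B.submatrix r id).det
      = ∑ s : ι → m, (∏ i, U (r i) (s i)) • (M.submatrix s id).det := by
    rw [hB]
    show (Matrix.detRowAlternating (n := ι) (R := R)).toMultilinearMap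
        (fun i => ∑ k, U (r i) k • M k) = _
    rw [MultilinearMap.map_sum]
    refine Finset.sum_congr rfl fun s _ => ?_
    show (Matrix.detRowAlternating (n := ι) (R := R)).toMultilinearMap
        (fun i => U (r i) (s i) • M (s i)) = _
    rw [MultilinearMap.map_smul_univ]
    rfl
  show (B.submatrix r id).det ∈ _
  rw [key]
  exact Ideal.sum_mem _ fun s _ => by
    rw [smul_eq_mul]
    exact Ideal.mul_mem_left _ _ (Ideal.subset_span ⟨s, rfl⟩)


section
variable {R : Type*} [CommRing R] {n d : ℕ}

/-- The row index `d + q` in `Fin n`. -/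
def lastIdx {n d : ℕ} (q : Fin (n - d)) : Fin n := ⟨d + (q : ℕ), by have := q.isLt; omega⟩

/-- The row-reduced Kalman matrix: block `0` is `(0 | I)`, block `i ≥ 1` is `([A^i] | 0)`. -/
noncomputable def redKalman (A : Matrix (Fin n) (Fin n) R) :
    Matrix (Fin (d + 1) × Fin (n - d)) (Fin n) R :=
  fun p j =>
    if p.1 = 0 then (if (j : ℕ) = d + (p.2 : ℕ) then 1 else 0)
    else if (j : ℕ) < d then (A ^ (p.1 : ℕ)) (lastIdx p.2) j
    else 0

theorem kalman_apply (A : Matrix (Fin n) (Fin n) R) (p : Fin (d + 1) × Fin (n - d)) (j : Fin n) :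
    kalmanMatrix (zeroIdMatrix R n d) A p j = (A ^ (p.1 : ℕ)) (lastIdx p.2) j := by
  unfold kalmanMatrix zeroIdMatrix
  show (∑ m : Fin n, (if (m : ℕ) = d + (p.2 : ℕ) then (1 : R) else 0) * (A ^ (p.1 : ℕ)) m j) = _
  rw [Finset.sum_eq_single (lastIdx p.2 : Fin n)]
  · simp [lastIdx]
  · intro m _ hm
    rw [if_neg, zero_mul]
    intro hv
    exact hm (Fin.ext hv)
  · simp

theorem redKalman_rows (A : Matrix (Fin n) (Fin n) R) (p : Fin (d + 1) × Fin (n - d)) :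
    redKalman A p = ∑ k, ((if k = p then 1 else 0) +
      (if p.1 ≠ 0 ∧ k.1 = 0 then -((A ^ (p.1 : ℕ)) (lastIdx p.2) (lastIdx k.2)) else 0)) •
        kalmanMatrix (zeroIdMatrix R n d) A k := by
  funext j
  simp only [Finset.sum_apply, Pi.smul_apply, smul_eq_mul, kalman_apply, add_mul,
    Finset.sum_add_distrib, ite_mul, one_mul, zero_mul, Finset.sum_ite_eq', Finset.mem_univ,
    if_true]
  by_cases hp : p.1 = 0
  · simp only [hp, ne_eq, not_true_eq_false, false_and, if_false, Finset.sum_const_zero,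
      add_zero, Fin.val_zero, pow_zero]
    rw [redKalman, if_pos hp, Matrix.one_apply]
    by_cases hj : (j : ℕ) = d + (p.2 : ℕ)
    · rw [if_pos hj, if_pos (Fin.ext (by simp [lastIdx, hj]))]
    · rw [if_neg hj, if_neg (fun he => hj (by simpa [lastIdx, Fin.ext_iff] using he.symm))]
  · simp only [hp, ne_eq, not_false_eq_true, true_and]
    rw [Fintype.sum_prod_type, Finset.sum_comm]
    simp only [ite_mul, zero_mul, Finset.sum_ite_eq', Finset.mem_univ, if_true]
    have hE : ∀ k2 : Fin (n - d),
        (A ^ (((0 : Fin (d + 1))) : ℕ)) (lastIdx k2) j = if lastIdx k2 = j then 1 else 0 :=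
      fun k2 => by simp [Matrix.one_apply]
    simp only [hE, mul_ite, mul_one, mul_zero]
    by_cases hj : (j : ℕ) < d
    · have hz : ∀ k2 : Fin (n - d),
          (if lastIdx k2 = j then -((A ^ (p.1 : ℕ)) (lastIdx p.2) (lastIdx k2)) else 0) = 0 := by
        intro k2
        rw [if_neg]
        intro he
        have := congrArg Fin.val he
        simp only [lastIdx] at this
        omega
      simp only [hz, Finset.sum_const_zero, add_zero]
      rw [redKalman, if_neg hp, if_pos hj]
    · have hjn := j.isLt
      set t : Fin (n - d) := ⟨(j : ℕ) - d, by omega⟩ with ht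
      have hlt : lastIdx t = j := Fin.ext (by show d + ((j : ℕ) - d) = (j : ℕ); omega)
      rw [Finset.sum_eq_single t]
      · rw [if_pos hlt, hlt, redKalman, if_neg hp, if_neg hj, add_neg_cancel]
      · intro k2 _ hk2
        rw [if_neg]
        intro he
        apply hk2
        have := congrArg Fin.val he
        simp only [lastIdx] at this
        exact Fin.ext (by show (k2 : ℕ) = (j : ℕ) - d; omega)
      · simp
theorem kalman_rows (A : Matrix (Fin n) (Fin n) R) (p : Fin (d + 1) × Fin (n - d)) :
    kalmanMatrix (zeroIdMatrix R n d) A p = ∑ k, ((if k = p then 1 else 0) +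
      (if p.1 ≠ 0 ∧ k.1 = 0 then (A ^ (p.1 : ℕ)) (lastIdx p.2) (lastIdx k.2) else 0)) •
        redKalman A k := by
  funext j
  simp only [Finset.sum_apply, Pi.smul_apply, smul_eq_mul, kalman_apply, add_mul,
    Finset.sum_add_distrib, ite_mul, one_mul, zero_mul, Finset.sum_ite_eq', Finset.mem_univ,
    if_true]
  by_cases hp : p.1 = 0
  · simp only [hp, ne_eq, not_true_eq_false, false_and, if_false, Finset.sum_const_zero,
      add_zero, Fin.val_zero, pow_zero]
    rw [redKalman, if_pos hp, Matrix.one_apply]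
    by_cases hj : (j : ℕ) = d + (p.2 : ℕ)
    · rw [if_pos hj, if_pos (Fin.ext (by simp [lastIdx, hj]))]
    · rw [if_neg hj, if_neg (fun he => hj (by simpa [lastIdx, Fin.ext_iff] using he.symm))]
  · simp only [hp, ne_eq, not_false_eq_true, true_and]
    rw [Fintype.sum_prod_type, Finset.sum_comm]
    simp only [ite_mul, zero_mul, Finset.sum_ite_eq', Finset.mem_univ, if_true]
    have hE : ∀ k2 : Fin (n - d),
        redKalman A ((0 : Fin (d + 1)), k2) j = if (j : ℕ) = d + (k2 : ℕ) then 1 else 0 :=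
      fun k2 => if_pos rfl
    simp only [hE, mul_ite, mul_one, mul_zero]
    by_cases hj : (j : ℕ) < d
    · have hz : ∀ k2 : Fin (n - d),
          (if (j : ℕ) = d + (k2 : ℕ) then (A ^ (p.1 : ℕ)) (lastIdx p.2) (lastIdx k2) else 0)
            = 0 := by
        intro k2
        rw [if_neg]
        omega
      simp only [hz, Finset.sum_const_zero, add_zero]
      rw [redKalman, if_neg hp, if_pos hj]
    · have hjn := j.isLt
      set t : Fin (n - d) := ⟨(j : ℕ) - d, by omega⟩ with ht
      have hlt : lastIdx t = j := Fin.ext (by show d + ((j : ℕ) - d) = (j : ℕ); omega)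
      rw [Finset.sum_eq_single t]
      · rw [if_pos (by show (j : ℕ) = d + ((j : ℕ) - d); omega), hlt, redKalman, if_neg hp,
          if_neg hj, zero_add]
      · intro k2 _ hk2
        rw [if_neg]
        intro he
        exact hk2 (Fin.ext (by show (k2 : ℕ) = (j : ℕ) - d; omega))
      · simp
/-- The standard equivalence `Fin d ⊕ Fin (n - d) ≃ Fin n`. -/
def ec (hdn : d ≤ n) : Fin d ⊕ Fin (n - d) ≃ Fin n :=
  finSumFinEquiv.trans (finCongr (Nat.add_sub_cancel' hdn))

theorem ec_inl (hdn : d ≤ n) (a : Fin d) : ((ec hdn (Sum.inl a)) : ℕ) = (a : ℕ) := by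
  simp [ec]

theorem ec_inr (hdn : d ≤ n) (t : Fin (n - d)) : ((ec hdn (Sum.inr t)) : ℕ) = d + (t : ℕ) := by
  simp [ec]

theorem key_block (hdn : d ≤ n) (A : Matrix (Fin n) (Fin n) R)
    (r0 : Fin d → Fin d × Fin (n - d)) (x : Fin d ⊕ Fin (n - d)) (y : Fin d ⊕ Fin (n - d)) :
    Matrix.fromBlocks ((smallKalman hdn A).submatrix r0 id) 0 0
        (1 : Matrix (Fin (n - d)) (Fin (n - d)) R) x y
      = redKalman A
          (Sum.elim (fun a => (((r0 a).1).succ, (r0 a).2)) (fun t => ((0 : Fin (d + 1)), t)) x)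
          (ec hdn y) := by
  cases x with
  | inl a =>
    cases y with
    | inl b =>
      have h1 : ((ec hdn (Sum.inl b)) : ℕ) < d := by rw [ec_inl]; exact b.isLt
      show smallKalman hdn A (r0 a) b = redKalman A (((r0 a).1).succ, (r0 a).2) (ec hdn (Sum.inl b))
      rw [redKalman, if_neg (by exact Fin.succ_ne_zero _), if_pos h1]
      show (A ^ ((((r0 a).1 : ℕ)) + 1)) _ _ = _
      rw [show ((((r0 a).1).succ : Fin (d + 1)) : ℕ) = ((r0 a).1 : ℕ) + 1 from rfl]
      first
        | rfl
        | (congr 1 <;> exact Fin.ext (ec_inl hdn b).symm)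
    | inr t =>
      show (0 : R) = redKalman A (((r0 a).1).succ, (r0 a).2) (ec hdn (Sum.inr t))
      rw [redKalman, if_neg (by exact Fin.succ_ne_zero _), if_neg (by rw [ec_inr]; omega)]
  | inr s =>
    cases y with
    | inl b =>
      have h1 : ((ec hdn (Sum.inl b)) : ℕ) < d := by rw [ec_inl]; exact b.isLt
      show (0 : R) = redKalman A ((0 : Fin (d + 1)), s) (ec hdn (Sum.inl b))
      rw [redKalman, if_pos rfl, if_neg (by rw [ec_inl]; have := b.isLt; omega)]
    | inr t =>
      show (1 : Matrix (Fin (n - d)) (Fin (n - d)) R) s t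
          = redKalman A ((0 : Fin (d + 1)), s) (ec hdn (Sum.inr t))
      rw [redKalman, if_pos rfl, Matrix.one_apply]
      by_cases hst : s = t
      · rw [if_pos hst, if_pos (by rw [ec_inr, hst])]
      · rw [if_neg hst, if_neg (by
          rw [ec_inr]
          intro h
          have h' : d + (t : ℕ) = d + (s : ℕ) := h
          exact hst (Fin.ext (by omega)).symm)]

theorem span_small_le_span_red (hdn : d ≤ n) (A : Matrix (Fin n) (Fin n) R) :
    Ideal.span (Set.range fun r : Fin d → Fin d × Fin (n - d) =>
        ((smallKalman hdn A).submatrix r id).det)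
      ≤ Ideal.span (Set.range fun r : Fin n → Fin (d + 1) × Fin (n - d) =>
          ((redKalman A).submatrix r id).det) := by
  rw [Ideal.span_le]
  rintro _ ⟨r, rfl⟩
  set r' : Fin n → Fin (d + 1) × Fin (n - d) := fun i =>
    Sum.elim (fun a => (((r a).1).succ, (r a).2)) (fun t => ((0 : Fin (d + 1)), t))
      ((ec hdn).symm i) with hr'
  have hsub : (redKalman A).submatrix r' id
      = (Matrix.fromBlocks ((smallKalman hdn A).submatrix r id) 0 0
          (1 : Matrix (Fin (n - d)) (Fin (n - d)) R)).submatrix (ec hdn).symm (ec hdn).symm := by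
    ext i j
    rw [Matrix.submatrix_apply, Matrix.submatrix_apply,
      key_block hdn A r ((ec hdn).symm i) ((ec hdn).symm j), Equiv.apply_symm_apply]
    rfl
  have hdet : ((smallKalman hdn A).submatrix r id).det = ((redKalman A).submatrix r' id).det := by
    rw [hsub, Matrix.det_submatrix_equiv_self, Matrix.det_fromBlocks_zero₂₁, Matrix.det_one,
      mul_one]
  show ((smallKalman hdn A).submatrix r id).det ∈ _
  rw [hdet]
  exact Ideal.subset_span ⟨r', rfl⟩
theorem span_red_le_span_small (hdn : d ≤ n) (A : Matrix (Fin n) (Fin n) R) :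
    Ideal.span (Set.range fun r : Fin n → Fin (d + 1) × Fin (n - d) =>
        ((redKalman A).submatrix r id).det)
      ≤ Ideal.span (Set.range fun r : Fin d → Fin d × Fin (n - d) =>
          ((smallKalman hdn A).submatrix r id).det) := by
  rw [Ideal.span_le]
  rintro _ ⟨r, rfl⟩
  show ((redKalman A).submatrix r id).det ∈ _
  by_cases hinj : Function.Injective r
  swap
  · obtain ⟨i, j, hij, hne⟩ := Function.not_injective_iff.mp hinj
    rw [Matrix.det_zero_of_row_eq hne (by funext y; simp [Matrix.submatrix_apply, hij])]
    exact zero_mem _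
  by_cases hfull : ∀ t : Fin (n - d), ∃ i, r i = (0, t)
  swap
  · push_neg at hfull
    obtain ⟨t, ht⟩ := hfull
    rw [Matrix.det_eq_zero_of_column_eq_zero (lastIdx t) ?_]
    · exact zero_mem _
    intro i
    rw [Matrix.submatrix_apply, id]
    by_cases h0 : (r i).1 = 0
    · rw [redKalman, if_pos h0, if_neg]
      intro he
      have he' : d + (t : ℕ) = d + ((r i).2 : ℕ) := he
      refine ht i ?_
      have h2 : (r i).2 = t := Fin.ext (by omega)
      rw [← h0, ← h2]
    · rw [redKalman, if_neg h0, if_neg (by show ¬ d + (t : ℕ) < d; omega)]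
  · classical
    have hcard0 : (Finset.univ.filter fun i : Fin n => (r i).1 = 0).card = n - d := by
      have hb : (Finset.univ.filter fun i : Fin n => (r i).1 = 0).card
          = (Finset.univ : Finset (Fin (n - d))).card := by
        apply Finset.card_bij (fun i _ => (r i).2)
        · intros; exact Finset.mem_univ _
        · intro a ha b hb hab
          rw [Finset.mem_filter] at ha hb
          exact hinj (Prod.ext (ha.2.trans hb.2.symm) hab)
        · intro t _
          obtain ⟨i, hi⟩ := hfull t
          exact ⟨i, Finset.mem_filter.mpr ⟨Finset.mem_univ _, by rw [hi]⟩, by rw [hi]⟩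
      rw [hb, Finset.card_univ, Fintype.card_fin]
    have hcard1 : Fintype.card {i : Fin n // ¬ (r i).1 = 0} = d := by
      rw [Fintype.card_subtype]
      have h2 := Finset.card_filter_add_card_filter_not
        (s := (Finset.univ : Finset (Fin n))) (p := fun i => (r i).1 = 0)
      rw [Finset.card_univ, Fintype.card_fin] at h2
      omega
    set e1 : {i : Fin n // ¬ (r i).1 = 0} ≃ Fin d := Fintype.equivFinOfCardEq hcard1 with he1
    set q : Fin n → Fin d ⊕ Fin (n - d) := fun i =>
      if h : (r i).1 = 0 then Sum.inr (r i).2 else Sum.inl (e1 ⟨i, h⟩) with hqdef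
    have hq1 : ∀ i (h : (r i).1 = 0), q i = Sum.inr (r i).2 := fun i h => dif_pos h
    have hq2 : ∀ i (h : ¬ (r i).1 = 0), q i = Sum.inl (e1 ⟨i, h⟩) := fun i h => dif_neg h
    have hqinj : Function.Injective q := by
      intro i j hij
      by_cases hi : (r i).1 = 0 <;> by_cases hj : (r j).1 = 0
      · rw [hq1 i hi, hq1 j hj] at hij
        exact hinj (Prod.ext (hi.trans hj.symm) (Sum.inr.inj hij))
      · rw [hq1 i hi, hq2 j hj] at hij; exact absurd hij (by simp)
      · rw [hq2 i hi, hq1 j hj] at hij; exact absurd hij (by simp)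
      · rw [hq2 i hi, hq2 j hj] at hij
        exact congrArg Subtype.val (e1.injective (Sum.inl.inj hij))
    have hqbij : Function.Bijective q :=
      (Fintype.bijective_iff_injective_and_card q).mpr
        ⟨hqinj, by simp only [Fintype.card_sum, Fintype.card_fin]; omega⟩
    set eqv : Fin n ≃ Fin d ⊕ Fin (n - d) := Equiv.ofBijective q hqbij with heqv
    set r0 : Fin d → Fin d × Fin (n - d) := fun a =>
      (((r (e1.symm a).1).1).pred (e1.symm a).2, (r (e1.symm a).1).2) with hr0
    set P : Matrix (Fin d ⊕ Fin (n - d)) (Fin d ⊕ Fin (n - d)) R :=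
      Matrix.fromBlocks ((smallKalman hdn A).submatrix r0 id) 0 0
        (1 : Matrix (Fin (n - d)) (Fin (n - d)) R) with hP
    have key : ∀ (i : Fin n) (x : Fin d ⊕ Fin (n - d)),
        redKalman A (r i) (ec hdn x) = P (q i) x := by
      intro i x
      by_cases h : (r i).1 = 0
      · rw [hq1 i h]
        cases x with
        | inl b =>
          rw [hP, Matrix.fromBlocks_apply₂₁, redKalman, if_pos h, if_neg]
          · rfl
          · rw [ec_inl]; have := b.isLt; omega
        | inr t =>
          rw [hP, Matrix.fromBlocks_apply₂₂, redKalman, if_pos h, Matrix.one_apply]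
          by_cases hst : (r i).2 = t
          · rw [if_pos hst, if_pos (by rw [ec_inr, hst])]
          · rw [if_neg hst, if_neg (by
              rw [ec_inr]
              intro hc
              exact hst (Fin.ext (by omega)).symm)]
      · rw [hq2 i h]
        cases x with
        | inl b =>
          rw [hP, Matrix.fromBlocks_apply₁₁, Matrix.submatrix_apply, hr0, redKalman, if_neg h,
            if_pos (by rw [ec_inl]; exact b.isLt)]
          show _ = smallKalman hdn A _ b
          simp only [Equiv.symm_apply_apply]
          show (A ^ ((r i).1 : ℕ)) (lastIdx (r i).2) (ec hdn (Sum.inl b))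
            = (A ^ (((((r i).1).pred h : Fin d) : ℕ) + 1)) _ _
          have hv : ((r i).1 : ℕ) ≠ 0 := fun h0 => h (Fin.ext h0)
          have hexp : (((((r i).1).pred h : Fin d)) : ℕ) + 1 = ((r i).1 : ℕ) := by
            rw [Fin.coe_pred]; omega
          rw [hexp]
          first
            | rfl
            | (congr 1 <;> exact Fin.ext (by simp [lastIdx, ec_inl]))
        | inr t =>
          rw [hP, Matrix.fromBlocks_apply₁₂, redKalman, if_neg h, if_neg]
          · rfl
          · rw [ec_inr]; omega
    set tau : Equiv.Perm (Fin n) := eqv.trans (ec hdn) with htau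
    have hsub : (redKalman A).submatrix r id
        = (P.submatrix (ec hdn).symm (ec hdn).symm).submatrix tau id := by
      ext i j
      simp only [Matrix.submatrix_apply, id]
      rw [show tau i = ec hdn (eqv i) from rfl, Equiv.symm_apply_apply]
      have hk := key i ((ec hdn).symm j)
      rw [Equiv.apply_symm_apply] at hk
      exact hk
    rw [hsub, Matrix.det_permute, Matrix.det_submatrix_equiv_self, hP,
      Matrix.det_fromBlocks_zero₂₁, Matrix.det_one, mul_one]
    exact Ideal.mul_mem_left _ _ (Ideal.subset_span ⟨r0, rfl⟩)
end

/-- For `C = (0 | I)`, the ideal generated by the `n × n` minors of the Kalman matrix of the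
generic matrix equals the ideal generated by the `d × d` minors of the small Kalman matrix. -/
theorem stmt16 {K : Type*} [Field K] (n d : ℕ) (hn : 2 ≤ n) (hd1 : 1 ≤ d) (hd2 : d ≤ n - 1) :
    Ideal.span (Set.range fun r : Fin n → Fin (d + 1) × Fin (n - d) =>
        ((kalmanMatrix (zeroIdMatrix (MvPolynomial (Fin n × Fin n) K) n d)
            (genMatrix K n)).submatrix r id).det)
      = Ideal.span (Set.range fun r : Fin d → Fin d × Fin (n - d) =>
          ((smallKalman (show d ≤ n by omega) (genMatrix K n)).submatrix r id).det) := by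
  have hdn : d ≤ n := by omega
  have h1 : Ideal.span (Set.range fun r : Fin n → Fin (d + 1) × Fin (n - d) =>
        ((kalmanMatrix (zeroIdMatrix (MvPolynomial (Fin n × Fin n) K) n d)
            (genMatrix K n)).submatrix r id).det)
      ≤ Ideal.span (Set.range fun r : Fin n → Fin (d + 1) × Fin (n - d) =>
          ((redKalman (genMatrix K n)).submatrix r id).det) :=
    span_minors_le _ _ _ (kalman_rows (genMatrix K n))
  have h2 : Ideal.span (Set.range fun r : Fin n → Fin (d + 1) × Fin (n - d) =>
        ((redKalman (genMatrix K n)).submatrix r id).det)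
      ≤ Ideal.span (Set.range fun r : Fin n → Fin (d + 1) × Fin (n - d) =>
          ((kalmanMatrix (zeroIdMatrix (MvPolynomial (Fin n × Fin n) K) n d)
            (genMatrix K n)).submatrix r id).det) :=
    span_minors_le _ _ _ (redKalman_rows (genMatrix K n))
  have h3 := span_small_le_span_red (show d ≤ n by omega) (genMatrix K n)
  have h4 := span_red_le_span_small (show d ≤ n by omega) (genMatrix K n)
  exact le_antisymm (h1.trans h4) (h3.trans h2)
end
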